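/- Let C ⊆ 𝔽_2^{24} be the extended binary Golay code, which contains the all-ones word. Then there exists a subset S of C containing exactly one codeword from each complementary pair {c, c + 𝟙} such that the sum over S of the codewords, viewed as integer vectors in ℤ^{24}, equals half of the sum over all of C of the codewords viewed as integer vectors. -/

import Mathlib

/-- Edge list of the icosahedron graph on 12 vertices: vertex 0 is a top
vertex, 1–5 the upper pentagon, 6–10 the lower pentagon, 11 the bottom vertex. -/
def icosEdges : List (Fin 12 × Fin 12) :=
  [(0,1),(0,2),(0,3),(0,4),(0,5),
   (1,2),(2,3),(3,4),(4,5),(5,1),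
   (11,6),(11,7),(11,8),(11,9),(11,10),
   (6,7),(7,8),(8,9),(9,10),(10,6),
   (1,6),(1,7),(2,7),(2,8),(3,8),(3,9),(4,9),(4,10),(5,10),(5,6)]

/-- Adjacency matrix of the icosahedron graph over `𝔽₂`. -/
def icosAdj : Matrix (Fin 12) (Fin 12) (ZMod 2) :=
  fun i j => if (i, j) ∈ icosEdges ∨ (j, i) ∈ icosEdges then 1 else 0

/-- `P = J - A` where `J` is the all-ones matrix and `A` the icosahedron
adjacency matrix. -/
def golayP : Matrix (Fin 12) (Fin 12) (ZMod 2) := fun i j => 1 - icosAdj i j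

/-- Generator matrix `G = [I | P]` of the extended binary Golay code; columns
are indexed by `Fin 12 ⊕ Fin 12`. -/
def golayG : Matrix (Fin 12) (Fin 12 ⊕ Fin 12) (ZMod 2) :=
  Matrix.fromCols 1 golayP

/-- The extended binary Golay code: the row span of `G = [I | P]`. -/
def golayCode : Finset ((Fin 12 ⊕ Fin 12) → ZMod 2) :=
  Finset.image (fun x : Fin 12 → ZMod 2 => Matrix.vecMul x golayG) Finset.univ

/-- A codeword viewed as a 0-1 integer vector in `ℤ^24`. -/
def intVec (c : (Fin 12 ⊕ Fin 12) → ZMod 2) : (Fin 12 ⊕ Fin 12) → ℤ :=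
  fun j => ((c j).val : ℤ)

/-- Auxiliary linear functional used to split complementary pairs. -/
def golayPhi (x : Fin 12 → ZMod 2) : ZMod 2 := x 0 + x 1 + x 2

/-- For each column `j`, a message vector `v` with `golayPhi v = 1` whose
codeword vanishes at `j`. -/
def golayShift : (Fin 12 ⊕ Fin 12) → (Fin 12 → ZMod 2)
| .inl i => fun k => if k = (if i = 0 then 1 else 0) then 1 else 0
| .inr i => fun k =>
    if i = 1 ∨ i = 2 ∨ i = 3 ∨ i = 4 ∨ i = 5 then (if k = 0 then 1 else 0)
    else if i = 0 ∨ i = 6 ∨ i = 7 then (if k = 1 then 1 else 0)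
    else if i = 8 then (if k = 2 then 1 else 0)
    else if i = 9 then (if k = 0 ∨ k = 5 then 1 else 0)
    else (if k = 0 ∨ k = 3 then 1 else 0)

lemma golayShift_prop :
    ∀ j, golayPhi (golayShift j) = 1 ∧ Matrix.vecMul (golayShift j) golayG j = 0 := by
  decide

lemma golay_one : Matrix.vecMul (fun _ => (1 : ZMod 2)) golayG = 1 := by decide

lemma golay_coord (x : Fin 12 → ZMod 2) (i : Fin 12) :
    Matrix.vecMul x golayG (Sum.inl i) = x i := by
  simp [golayG, Matrix.vecMul, dotProduct, Matrix.fromCols, Matrix.one_apply,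
    mul_ite, Finset.sum_ite_eq']

lemma golay_inj :
    Function.Injective (fun x : Fin 12 → ZMod 2 => Matrix.vecMul x golayG) := by
  intro x y h
  funext i
  have := congrFun h (Sum.inl i)
  simpa [golay_coord] using this

/-- The extended Golay code contains the all-ones word, and there is a subset
`S` containing exactly one codeword from each complementary pair `{c, c + 𝟙}`
such that the sum over `S` of the codewords, viewed as integer vectors, equals
half the sum over the whole code. -/
theorem stmt_11 :
    (1 : (Fin 12 ⊕ Fin 12) → ZMod 2) ∈ golayCode ∧
    ∃ S : Finset ((Fin 12 ⊕ Fin 12) → ZMod 2),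
      (∀ c ∈ S, c ∈ golayCode) ∧
      (∀ c ∈ golayCode, (c ∈ S ↔ c + 1 ∉ S)) ∧
      2 • (∑ c ∈ S, intVec c) = ∑ c ∈ golayCode, intVec c := by
  classical
  set T : Finset (Fin 12 → ZMod 2) := Finset.univ.filter (fun x => golayPhi x = 0) with hT
  set S : Finset ((Fin 12 ⊕ Fin 12) → ZMod 2) :=
    T.image (fun x => Matrix.vecMul x golayG) with hS
  have hmemS : ∀ x : Fin 12 → ZMod 2,
      Matrix.vecMul x golayG ∈ S ↔ golayPhi x = 0 := by
    intro x
    constructor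
    · intro hx
      obtain ⟨y, hy, hyx⟩ := Finset.mem_image.mp hx
      have : y = x := golay_inj hyx
      subst this
      exact (Finset.mem_filter.mp hy).2
    · intro hx
      exact Finset.mem_image.mpr ⟨x, Finset.mem_filter.mpr ⟨Finset.mem_univ _, hx⟩, rfl⟩
  have hadd1 : ∀ x : Fin 12 → ZMod 2,
      Matrix.vecMul x golayG + 1 = Matrix.vecMul (x + fun _ => 1) golayG := by
    intro x
    rw [Matrix.add_vecMul, golay_one]
  have hphiadd : ∀ x v : Fin 12 → ZMod 2, golayPhi (x + v) = golayPhi x + golayPhi v := by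
    intro x v
    simp only [golayPhi, Pi.add_apply]
    ring
  refine ⟨Finset.mem_image.mpr ⟨fun _ => 1, Finset.mem_univ _, golay_one⟩, S, ?_, ?_, ?_⟩
  · intro c hc
    obtain ⟨x, hx, rfl⟩ := Finset.mem_image.mp hc
    exact Finset.mem_image.mpr ⟨x, Finset.mem_univ _, rfl⟩
  · intro c hc
    obtain ⟨x, -, rfl⟩ := Finset.mem_image.mp hc
    rw [hadd1, hmemS, hmemS, hphiadd]
    have : golayPhi (fun _ => (1 : ZMod 2)) = 1 := by decide
    rw [this]
    generalize golayPhi x = a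
    revert a; decide
  · funext j
    have hsum_image : ∀ (U : Finset (Fin 12 → ZMod 2)),
        ∑ c ∈ U.image (fun x => Matrix.vecMul x golayG), intVec c
          = ∑ x ∈ U, intVec (Matrix.vecMul x golayG) :=
      fun U => Finset.sum_image (fun a _ b _ h => golay_inj h)
    have hgc : ∑ c ∈ golayCode, intVec c
        = ∑ x : Fin 12 → ZMod 2, intVec (Matrix.vecMul x golayG) := hsum_image _
    have hsc : ∑ c ∈ S, intVec c = ∑ x ∈ T, intVec (Matrix.vecMul x golayG) := hsum_image _
    rw [hgc, hsc]
    simp only [Pi.smul_apply, Finset.sum_apply, intVec]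
    have hbij : ∑ x ∈ Finset.univ.filter (fun x => ¬ golayPhi x = 0),
          ((Matrix.vecMul x golayG j).val : ℤ)
        = ∑ x ∈ T, ((Matrix.vecMul x golayG j).val : ℤ) := by
      refine Finset.sum_nbij' (fun x => x + golayShift j) (fun x => x + golayShift j)
        ?_ ?_ ?_ ?_ ?_
      · intro a ha
        have ha' := (Finset.mem_filter.mp ha).2
        rw [hT]
        refine Finset.mem_filter.mpr ⟨Finset.mem_univ _, ?_⟩
        rw [hphiadd, (golayShift_prop j).1]
        revert ha'
        generalize golayPhi a = b
        revert b; decide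
      · intro a ha
        have ha' := (Finset.mem_filter.mp (hT ▸ ha)).2
        refine Finset.mem_filter.mpr ⟨Finset.mem_univ _, ?_⟩
        rw [hphiadd, (golayShift_prop j).1]
        revert ha'
        generalize golayPhi a = b
        revert b; decide
      · intro a _
        funext k
        simp only [Pi.add_apply]
        generalize golayShift j k = b
        generalize a k = c
        revert b c; decide
      · intro a _
        funext k
        simp only [Pi.add_apply]
        generalize golayShift j k = b
        generalize a k = c
        revert b c; decide
      · intro a _
        rw [Matrix.add_vecMul]
        simp [(golayShift_prop j).2]
    have hsplit := Finset.sum_filter_add_sum_filter_not Finset.univ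
      (fun x => golayPhi x = 0) (fun x => ((Matrix.vecMul x golayG j).val : ℤ))
    rw [← hsplit, hbij, ← hT]
    ring
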